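/- Spine reduction of the FMC is diamond: for any peak N ←s M →s P of single spine-reduction steps, there is a term Q such that N and P each reach Q in at most one spine-reduction step. -/

import Mathlib

/-- Terms of the Functional Machine Calculus over a set `A` of locations,
in de Bruijn representation (so terms are automatically identified up to
α-equivalence): nil, variable prefix, push/application on a location,
and pop/abstraction on a location. -/
inductive Tm (A : Type) : Type
  | star : Tm A
  | var  : Nat → Tm A → Tm A
  | push : Tm A → A → Tm A → Tm A
  | pop  : A → Tm A → Tm A

namespace Tm

variable {A : Type}

/-- Lifting of a renaming under a binder. -/
def liftF (f : Nat → Nat) : Nat → Nat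
  | 0 => 0
  | n+1 => f n + 1

/-- Renaming of de Bruijn indices. -/
def rename (f : Nat → Nat) : Tm A → Tm A
  | star => star
  | var n M => var (f n) (rename f M)
  | push N a M => push (rename f N) a (rename f M)
  | pop a M => pop a (rename (liftF f) M)

/-- Capture-avoiding composition `N ; M`. -/
def comp : Tm A → Tm A → Tm A
  | star, P => P
  | var n N, P => var n (comp N P)
  | push Q a N, P => push Q a (comp N P)
  | pop a N, P => pop a (comp N (rename Nat.succ P))

/-- Lifting of a substitution under a binder. -/
def liftS (σ : Nat → Tm A) : Nat → Tm A
  | 0 => var 0 star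
  | n+1 => rename Nat.succ (σ n)

/-- Capture-avoiding simultaneous substitution; note
`{N/x}(x.M) = N ; {N/x}M`. -/
def subst (σ : Nat → Tm A) : Tm A → Tm A
  | star => star
  | var n M => comp (σ n) (subst σ M)
  | push N a M => push (subst σ N) a (subst σ M)
  | pop a M => pop a (subst (liftS σ) M)

/-- Capture-avoiding substitution `{N/x}M` of `N` for the variable
bound immediately outside `M`. -/
def subst1 (N : Tm A) : Tm A → Tm A :=
  subst (fun n => match n with | 0 => N | n+1 => var n star)

end Tm

/-- Head contexts `H ::= {} | [M]a.H | a<x>.H`. -/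
inductive Hd (A : Type) : Type
  | hole : Hd A
  | push : Tm A → A → Hd A → Hd A
  | pop  : A → Hd A → Hd A

namespace Hd

variable {A : Type}

/-- Plugging a term into the hole of a head context (binders of `H` capture). -/
def plug : Hd A → Tm A → Tm A
  | hole, M => M
  | push N a H, M => Tm.push N a (plug H M)
  | pop a H, M => Tm.pop a (plug H M)

/-- The number of binders of a head context. -/
def binders : Hd A → Nat
  | hole => 0
  | push _ _ H => binders H
  | pop _ H => binders H + 1

/-- The locations occurring along the spine of a head context. -/
def locs : Hd A → List A
  | hole => []
  | push _ a H => a :: locs H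
  | pop a H => a :: locs H

end Hd

/-- Spine reduction of the FMC: the β-rule `[N]a.H.a<x>.M → H.{N/x}M`
(with the location `a` not occurring in `H`) closed under all contexts
except argument position: no reduction inside the argument `N` of a push. -/
inductive SpineStep {A : Type} : Tm A → Tm A → Prop
  | beta (N : Tm A) (a : A) (H : Hd A) (M : Tm A) (h : a ∉ H.locs) :
      SpineStep (Tm.push N a (H.plug (Tm.pop a M)))
                (H.plug (Tm.subst1 (Tm.rename (· + H.binders) N) M))
  | var {M M' : Tm A} (n : Nat) : SpineStep M M' → SpineStep (Tm.var n M) (Tm.var n M')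
  | pushL {M M' : Tm A} (N : Tm A) (a : A) :
      SpineStep M M' → SpineStep (Tm.push N a M) (Tm.push N a M')
  | pop {M M' : Tm A} (a : A) : SpineStep M M' → SpineStep (Tm.pop a M) (Tm.pop a M')

namespace Tm
variable {A : Type}

theorem rename_congr {f g : Nat → Nat} (h : ∀ n, f n = g n) (M : Tm A) :
    rename f M = rename g M := by rw [show f = g from funext h]

theorem subst_congr {σ τ : Nat → Tm A} (h : ∀ n, σ n = τ n) (M : Tm A) :
    subst σ M = subst τ M := by rw [show σ = τ from funext h]

theorem liftF_liftF (f g : Nat → Nat) (n : Nat) :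
    liftF f (liftF g n) = liftF (fun n => f (g n)) n := by cases n <;> rfl

theorem rename_rename (f g : Nat → Nat) (M : Tm A) :
    rename f (rename g M) = rename (fun n => f (g n)) M := by
  induction M generalizing f g with
  | star => rfl
  | var n M ih => simp only [rename, ih]
  | push N a M ihN ihM => simp only [rename, ihN, ihM]
  | pop a M ih =>
    simp only [rename, ih]
    exact congrArg _ (rename_congr (liftF_liftF f g) M)

theorem rename_star (f : Nat → Nat) : rename f (star : Tm A) = star := rfl

theorem rename_comp (f : Nat → Nat) (M N : Tm A) :
    rename f (comp M N) = comp (rename f M) (rename f N) := by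
  induction M generalizing f N with
  | star => rfl
  | var n M ih => simp only [comp, rename, ih]
  | push Q a M ihQ ihM => simp only [comp, rename, ihM]
  | pop a M ih =>
    simp only [comp, rename, ih]
    refine congrArg _ (congrArg _ ?_)
    rw [rename_rename, rename_rename]
    exact rename_congr (fun n => rfl) N

theorem comp_star (M : Tm A) : comp M star = M := by
  induction M with
  | star => rfl
  | var n M ih => simp only [comp, ih]
  | push Q a M ihQ ihM => simp only [comp, ihM]
  | pop a M ih => simp only [comp, rename_star, ih]

theorem comp_assoc (M N P : Tm A) : comp (comp M N) P = comp M (comp N P) := by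
  induction M generalizing N P with
  | star => rfl
  | var n M ih => simp only [comp, ih]
  | push Q a M ihQ ihM => simp only [comp, ihM]
  | pop a M ih => simp only [comp, ih, rename_comp]

theorem liftS_liftF (σ : Nat → Tm A) (f : Nat → Nat) (n : Nat) :
    liftS σ (liftF f n) = liftS (fun n => σ (f n)) n := by cases n <;> rfl

theorem subst_rename (σ : Nat → Tm A) (f : Nat → Nat) (M : Tm A) :
    subst σ (rename f M) = subst (fun n => σ (f n)) M := by
  induction M generalizing σ f with
  | star => rfl
  | var n M ih => simp only [rename, subst, ih]
  | push N a M ihN ihM => simp only [rename, subst, ihN, ihM]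
  | pop a M ih =>
    simp only [rename, subst, ih]
    exact congrArg _ (subst_congr (liftS_liftF σ f) M)

theorem rename_subst (f : Nat → Nat) (σ : Nat → Tm A) (M : Tm A) :
    rename f (subst σ M) = subst (fun n => rename f (σ n)) M := by
  induction M generalizing σ f with
  | star => rfl
  | var n M ih => simp only [subst, rename_comp, ih]
  | push N a M ihN ihM => simp only [subst, rename, ihN, ihM]
  | pop a M ih =>
    simp only [subst, rename, ih]
    refine congrArg _ (subst_congr (fun n => ?_) M)
    cases n with
    | zero => rfl
    | succ n =>
      show rename (liftF f) (rename Nat.succ (σ n)) = rename Nat.succ (rename f (σ n))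
      rw [rename_rename, rename_rename]
      exact rename_congr (fun n => rfl) (σ n)

theorem subst_comp (σ : Nat → Tm A) (M N : Tm A) :
    subst σ (comp M N) = comp (subst σ M) (subst σ N) := by
  induction M generalizing σ N with
  | star => rfl
  | var n M ih => simp only [comp, subst, ih, comp_assoc]
  | push Q a M ihQ ihM => simp only [comp, subst, ihM]
  | pop a M ih =>
    simp only [comp, subst, ih]
    refine congrArg _ (congrArg _ ?_)
    rw [subst_rename, rename_subst]
    exact subst_congr (fun n => rfl) N

theorem subst_subst (τ σ : Nat → Tm A) (M : Tm A) :
    subst τ (subst σ M) = subst (fun n => subst τ (σ n)) M := by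
  induction M generalizing τ σ with
  | star => rfl
  | var n M ih => simp only [subst, subst_comp, ih]
  | push N a M ihN ihM => simp only [subst, ihN, ihM]
  | pop a M ih =>
    simp only [subst, ih]
    refine congrArg _ (subst_congr (fun n => ?_) M)
    cases n with
    | zero => simp [liftS, subst, comp, comp_star]
    | succ n =>
      show subst (liftS τ) (rename Nat.succ (σ n)) = rename Nat.succ (subst τ (σ n))
      rw [subst_rename, rename_subst]
      exact subst_congr (fun n => rfl) (σ n)

theorem subst_id (M : Tm A) : subst (fun n => var n star) M = M := by
  induction M with
  | star => rfl
  | var n M ih => simp only [subst, comp, ih]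
  | push N a M ihN ihM => simp only [subst, ihN, ihM]
  | pop a M ih =>
    simp only [subst]
    refine congrArg _ (Eq.trans (subst_congr (fun n => ?_) M) ih)
    cases n <;> rfl

theorem subst_varf (f : Nat → Nat) (M : Tm A) :
    subst (fun n => var (f n) star) M = rename f M := by
  induction M generalizing f with
  | star => rfl
  | var n M ih => simp only [subst, comp, rename, ih]
  | push N a M ihN ihM => simp only [subst, rename, ihN, ihM]
  | pop a M ih =>
    simp only [subst, rename]
    refine congrArg _ (Eq.trans (subst_congr (fun n => ?_) M) (ih (liftF f)))
    cases n <;> rfl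

theorem subst_var_star (σ : Nat → Tm A) (m : Nat) :
    subst σ (var m star) = σ m := by simp [subst, comp_star]

end Tm
namespace Tm
variable {A : Type}

theorem rename_id (M : Tm A) : rename (fun n => n) M = M := by
  rw [← subst_varf]; exact subst_id M

def liftFn : Nat → (Nat → Nat) → (Nat → Nat)
  | 0, f => f
  | k+1, f => liftF (liftFn k f)

def liftSn : Nat → (Nat → Tm A) → (Nat → Tm A)
  | 0, σ => σ
  | k+1, σ => liftS (liftSn k σ)

theorem liftFn_liftF (k : Nat) (f : Nat → Nat) :
    liftFn k (liftF f) = liftFn (k+1) f := by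
  induction k with
  | zero => rfl
  | succ k ih => show liftF _ = liftF _ ; rw [ih]

theorem liftSn_liftS (k : Nat) (σ : Nat → Tm A) :
    liftSn k (liftS σ) = liftSn (k+1) σ := by
  induction k with
  | zero => rfl
  | succ k ih => show liftS _ = liftS _ ; rw [ih]

theorem liftFn_small {k n : Nat} (f : Nat → Nat) (h : n < k) : liftFn k f n = n := by
  induction k generalizing n with
  | zero => omega
  | succ k ih =>
    cases n with
    | zero => rfl
    | succ n => show liftFn k f n + 1 = n + 1; rw [ih (by omega)]

theorem liftFn_shift (k : Nat) (f : Nat → Nat) (n : Nat) :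
    liftFn k f (n + k) = f n + k := by
  induction k with
  | zero => rfl
  | succ k ih => show liftFn k f (n + k) + 1 = f n + (k+1)
                 omega

theorem liftSn_small {k n : Nat} (σ : Nat → Tm A) (h : n < k) :
    liftSn k σ n = var n star := by
  induction k generalizing n with
  | zero => omega
  | succ k ih =>
    cases n with
    | zero => rfl
    | succ n =>
      show rename Nat.succ (liftSn k σ n) = _
      rw [ih (by omega)]; rfl

theorem liftSn_shift (k : Nat) (σ : Nat → Tm A) (n : Nat) :
    liftSn k σ (n + k) = rename (· + k) (σ n) := by
  induction k with
  | zero =>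
    exact ((rename_congr (f := fun x => x + 0) (g := fun n => n) (fun _ => rfl) (σ n)).trans
      (rename_id _)).symm
  | succ k ih =>
    show rename Nat.succ (liftSn k σ (n + k)) = _
    rw [ih, rename_rename]
    exact rename_congr (fun n => rfl) _

end Tm
namespace Hd
variable {A : Type}

def append : Hd A → Hd A → Hd A
  | hole, K => K
  | push N a H, K => push N a (append H K)
  | pop a H, K => pop a (append H K)

@[simp] theorem plug_append (H K : Hd A) (M : Tm A) :
    (append H K).plug M = H.plug (K.plug M) := by
  induction H with
  | hole => rfl
  | push N a H ih => simp [append, plug, ih]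
  | pop a H ih => simp [append, plug, ih]

@[simp] theorem binders_append (H K : Hd A) :
    (append H K).binders = H.binders + K.binders := by
  induction H with
  | hole => simp [append, binders]
  | push N a H ih => simp [append, binders, ih]
  | pop a H ih => simp [append, binders, ih]; omega

@[simp] theorem locs_append (H K : Hd A) :
    (append H K).locs = H.locs ++ K.locs := by
  induction H with
  | hole => rfl
  | push N a H ih => simp [append, locs, ih]
  | pop a H ih => simp [append, locs, ih]

/-- Substitution applied to a head context. -/
def substC (σ : Nat → Tm A) : Hd A → Hd A
  | hole => hole
  | push N a H => push (Tm.subst σ N) a (substC σ H)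
  | pop a H => pop a (substC (Tm.liftS σ) H)

@[simp] theorem binders_substC (σ : Nat → Tm A) (H : Hd A) :
    (substC σ H).binders = H.binders := by
  induction H generalizing σ with
  | hole => rfl
  | push N a H ih => simp [substC, binders, ih]
  | pop a H ih => simp [substC, binders, ih]

@[simp] theorem locs_substC (σ : Nat → Tm A) (H : Hd A) :
    (substC σ H).locs = H.locs := by
  induction H generalizing σ with
  | hole => rfl
  | push N a H ih => simp [substC, locs, ih]
  | pop a H ih => simp [substC, locs, ih]

theorem subst_plug (σ : Nat → Tm A) (H : Hd A) (M : Tm A) :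
    Tm.subst σ (H.plug M) = (substC σ H).plug (Tm.subst (Tm.liftSn H.binders σ) M) := by
  induction H generalizing σ with
  | hole => rfl
  | push N a H ih => simp only [plug, Tm.subst, substC, binders, ih]
  | pop a H ih =>
    simp only [plug, Tm.subst, substC, binders, ih]
    rw [Tm.liftSn_liftS]

/-- Renaming applied to a head context. -/
def renameC (f : Nat → Nat) : Hd A → Hd A
  | hole => hole
  | push N a H => push (Tm.rename f N) a (renameC f H)
  | pop a H => pop a (renameC (Tm.liftF f) H)

@[simp] theorem binders_renameC (f : Nat → Nat) (H : Hd A) :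
    (renameC f H).binders = H.binders := by
  induction H generalizing f with
  | hole => rfl
  | push N a H ih => simp [renameC, binders, ih]
  | pop a H ih => simp [renameC, binders, ih]

@[simp] theorem locs_renameC (f : Nat → Nat) (H : Hd A) :
    (renameC f H).locs = H.locs := by
  induction H generalizing f with
  | hole => rfl
  | push N a H ih => simp [renameC, locs, ih]
  | pop a H ih => simp [renameC, locs, ih]

theorem rename_plug (f : Nat → Nat) (H : Hd A) (M : Tm A) :
    Tm.rename f (H.plug M) = (renameC f H).plug (Tm.rename (Tm.liftFn H.binders f) M) := by
  induction H generalizing f with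
  | hole => rfl
  | push N a H ih => simp only [plug, Tm.rename, renameC, binders, ih]
  | pop a H ih =>
    simp only [plug, Tm.rename, renameC, binders, ih]
    rw [Tm.liftFn_liftF]

end Hd
namespace Tm
variable {A : Type}

def sOne (N : Tm A) : Nat → Tm A := fun n => match n with | 0 => N | n+1 => var n star

theorem subst1_eq (N : Tm A) : subst1 N = subst (sOne N) := rfl

theorem succB (σ : Nat → Tm A) (P' : Tm A) (j m : Nat) :
    subst (sOne P') (liftSn (j+1) σ (m+1)) = liftSn j σ m := by
  rcases Nat.lt_or_ge m j with h | h
  · rw [liftSn_small σ (show m+1 < j+1 by omega), subst_var_star,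
      liftSn_small σ h]
    rfl
  · obtain ⟨i, rfl⟩ := Nat.exists_eq_add_of_le h
    rw [show j + i + 1 = i + (j+1) by omega, liftSn_shift, subst_rename,
      show j + i = i + j by omega, liftSn_shift]
    rw [subst_congr (σ := fun n => sOne P' (n + (j+1))) (τ := fun x => var (x + j) star)
      (fun x => rfl) (σ i)]
    exact subst_varf (fun x => x + j) (σ i)

theorem commD (σ : Nat → Tm A) (N M : Tm A) (j : Nat) :
    subst (liftSn j σ) (subst1 (rename (· + j) N) M)
      = subst1 (rename (· + j) (subst σ N)) (subst (liftSn (j+1) σ) M) := by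
  rw [subst1_eq, subst1_eq, subst_subst, subst_subst]
  refine subst_congr (fun n => ?_) M
  cases n with
  | zero =>
    show subst (liftSn j σ) (rename (· + j) N)
        = subst (sOne (rename (· + j) (subst σ N))) (liftSn (j+1) σ 0)
    rw [liftSn_small _ (Nat.succ_pos j), subst_var_star, subst_rename]
    show subst (fun n => liftSn j σ (n + j)) N = _
    rw [subst_congr (τ := fun n => rename (· + j) (σ n)) (fun n => liftSn_shift j σ n) N,
      ← rename_subst]
    rfl
  | succ m =>
    show subst (liftSn j σ) (var m star) = _
    rw [subst_var_star, succB]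

theorem commC (Q P M : Tm A) (c j : Nat) :
    subst (liftSn j (sOne Q)) (subst1 (rename (· + (c+1+j)) P) M)
      = subst1 (rename (· + (c+j)) P) (subst (liftSn (j+1) (sOne Q)) M) := by
  rw [subst1_eq, subst1_eq, subst_subst, subst_subst]
  refine subst_congr (fun n => ?_) M
  cases n with
  | zero =>
    show subst (liftSn j (sOne Q)) (rename (· + (c+1+j)) P)
        = subst (sOne (rename (· + (c+j)) P)) (liftSn (j+1) (sOne Q) 0)
    rw [liftSn_small _ (Nat.succ_pos j), subst_var_star, subst_rename]
    refine Eq.trans (subst_congr (τ := fun m => var (m + (c+j)) star) (fun m => ?_) P) ?_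
    · show liftSn j (sOne Q) (m + (c+1+j)) = _
      rw [show m + (c+1+j) = (m + c + 1) + j by omega, liftSn_shift]
      show rename (· + j) (var (m + c) star) = _
      show var (m + c + j) star = _
      rw [show m + c + j = m + (c + j) by omega]
    · exact subst_varf (fun m => m + (c+j)) P
  | succ m =>
    show subst (liftSn j (sOne Q)) (var m star) = _
    rw [subst_var_star, succB]

theorem commE (f : Nat → Nat) (N M : Tm A) (j : Nat) :
    rename (liftFn j f) (subst1 (rename (· + j) N) M)
      = subst1 (rename (· + j) (rename f N)) (rename (liftFn (j+1) f) M) := by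
  rw [subst1_eq, subst1_eq, rename_subst, subst_rename]
  refine subst_congr (fun n => ?_) M
  cases n with
  | zero =>
    show rename (liftFn j f) (rename (· + j) N) = sOne (rename (· + j) (rename f N)) (liftFn (j+1) f 0)
    rw [liftFn_small f (Nat.succ_pos j)]
    show _ = rename (· + j) (rename f N)
    rw [rename_rename, rename_rename]
    exact rename_congr (fun n => liftFn_shift j f n) N
  | succ m =>
    show var (liftFn j f m) star = sOne _ (liftFn (j+1) f (m+1))
    rcases Nat.lt_or_ge m j with h | h
    · rw [liftFn_small f (show m+1 < j+1 by omega), liftFn_small f h]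
      rfl
    · obtain ⟨i, rfl⟩ := Nat.exists_eq_add_of_le h
      rw [show j + i + 1 = i + (j+1) by omega, liftFn_shift,
        show j + i = i + j by omega, liftFn_shift]
      rfl

end Tm
section Steps
variable {A : Type}
open Tm Hd

theorem step_push_inv {N : Tm A} {a : A} {X P : Tm A}
    (h : SpineStep (Tm.push N a X) P) :
    (∃ X', P = Tm.push N a X' ∧ SpineStep X X') ∨
      ∃ (H : Hd A) (M : Tm A), X = H.plug (Tm.pop a M) ∧ a ∉ H.locs ∧
        P = H.plug (Tm.subst1 (Tm.rename (· + H.binders) N) M) := by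
  cases h with
  | beta N a H M hl => exact Or.inr ⟨H, M, rfl, hl, rfl⟩
  | pushL N a h => exact Or.inl ⟨_, rfl, h⟩

theorem step_pop_inv {a : A} {X P : Tm A} (h : SpineStep (Tm.pop a X) P) :
    ∃ X', P = Tm.pop a X' ∧ SpineStep X X' := by
  cases h with
  | pop a h => exact ⟨_, rfl, h⟩

theorem step_var_inv {n : Nat} {X P : Tm A} (h : SpineStep (Tm.var n X) P) :
    ∃ X', P = Tm.var n X' ∧ SpineStep X X' := by
  cases h with
  | var n h => exact ⟨_, rfl, h⟩

theorem rename_step {M M' : Tm A} (h : SpineStep M M') (f : Nat → Nat) :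
    SpineStep (Tm.rename f M) (Tm.rename f M') := by
  induction h generalizing f with
  | beta N a H M hl =>
    rw [Hd.rename_plug]
    simp only [Tm.rename]
    rw [Hd.rename_plug]
    simp only [Tm.rename]
    have hb := SpineStep.beta (Tm.rename f N) a (H.renameC f)
      (Tm.rename (Tm.liftF (Tm.liftFn H.binders f)) M)
      (by rw [Hd.locs_renameC]; exact hl)
    rw [Hd.binders_renameC] at hb
    have e : Tm.rename (Tm.liftFn H.binders f)
        (Tm.subst1 (Tm.rename (· + H.binders) N) M)
        = Tm.subst1 (Tm.rename (· + H.binders) (Tm.rename f N))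
            (Tm.rename (Tm.liftFn (H.binders + 1) f) M) := Tm.commE f N M H.binders
    rw [e]
    exact hb
  | var n h ih => exact SpineStep.var (f n) (ih f)
  | pushL N a h ih => exact SpineStep.pushL _ _ (ih f)
  | pop a h ih => exact SpineStep.pop _ (ih (Tm.liftF f))

theorem comp_step (P : Tm A) {X X' : Tm A} (h : SpineStep X X') :
    SpineStep (Tm.comp P X) (Tm.comp P X') := by
  induction P generalizing X X' with
  | star => exact h
  | var n M ih => exact SpineStep.var n (ih h)
  | push Q a M ihQ ihM => exact SpineStep.pushL _ _ (ihM h)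
  | pop a M ih => exact SpineStep.pop _ (ih (rename_step h Nat.succ))

theorem subst_step {M M' : Tm A} (h : SpineStep M M') (σ : Nat → Tm A) :
    SpineStep (Tm.subst σ M) (Tm.subst σ M') := by
  induction h generalizing σ with
  | beta N a H M hl =>
    rw [Hd.subst_plug]
    simp only [Tm.subst]
    rw [Hd.subst_plug]
    simp only [Tm.subst]
    have hb := SpineStep.beta (Tm.subst σ N) a (H.substC σ)
      (Tm.subst (Tm.liftS (Tm.liftSn H.binders σ)) M)
      (by rw [Hd.locs_substC]; exact hl)
    rw [Hd.binders_substC] at hb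
    have e : Tm.subst (Tm.liftSn H.binders σ)
        (Tm.subst1 (Tm.rename (· + H.binders) N) M)
        = Tm.subst1 (Tm.rename (· + H.binders) (Tm.subst σ N))
            (Tm.subst (Tm.liftSn (H.binders + 1) σ) M) := Tm.commD σ N M H.binders
    rw [e]
    exact hb
  | var n h ih => exact comp_step (σ _) (ih σ)
  | pushL N a h ih => exact SpineStep.pushL _ _ (ih σ)
  | pop a h ih => exact SpineStep.pop _ (ih (Tm.liftS σ))

end Steps
section Split
variable {A : Type}

theorem plug_split {a b : A} {M M' : Tm A} :
    ∀ (H K : Hd A), H.plug (Tm.pop a M) = K.plug (Tm.pop b M') →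
    (H = K ∧ a = b ∧ M = M')
    ∨ (∃ K2, K = H.append (Hd.pop a K2) ∧ M = K2.plug (Tm.pop b M'))
    ∨ (∃ H2, H = K.append (Hd.pop b H2) ∧ M' = H2.plug (Tm.pop a M)) := by
  intro H
  induction H with
  | hole =>
    intro K h
    cases K with
    | hole =>
      obtain ⟨rfl, rfl⟩ := Tm.pop.inj h
      exact Or.inl ⟨rfl, rfl, rfl⟩
    | push N c K1 => simp [Hd.plug] at h
    | pop c K1 =>
      obtain ⟨rfl, h2⟩ := Tm.pop.inj h
      exact Or.inr (Or.inl ⟨K1, rfl, h2⟩)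
  | push P c H1 ih =>
    intro K h
    cases K with
    | hole => simp [Hd.plug] at h
    | push P2 c2 K1 =>
      obtain ⟨rfl, rfl, h3⟩ := Tm.push.inj h
      rcases ih K1 h3 with ⟨rfl, h5, h6⟩ | ⟨K2, rfl, h5⟩ | ⟨H2, h4, h5⟩
      · exact Or.inl ⟨rfl, h5, h6⟩
      · exact Or.inr (Or.inl ⟨K2, rfl, h5⟩)
      · exact Or.inr (Or.inr ⟨H2, by rw [h4]; rfl, h5⟩)
    | pop c2 K1 => simp [Hd.plug] at h
  | pop c H1 ih =>
    intro K h
    cases K with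
    | hole =>
      obtain ⟨rfl, h2⟩ := Tm.pop.inj h
      exact Or.inr (Or.inr ⟨H1, rfl, h2.symm⟩)
    | push P2 c2 K1 => simp [Hd.plug] at h
    | pop c2 K1 =>
      obtain ⟨rfl, h3⟩ := Tm.pop.inj h
      rcases ih K1 h3 with ⟨rfl, h5, h6⟩ | ⟨K2, rfl, h5⟩ | ⟨H2, h4, h5⟩
      · exact Or.inl ⟨rfl, h5, h6⟩
      · exact Or.inr (Or.inl ⟨K2, rfl, h5⟩)
      · exact Or.inr (Or.inr ⟨H2, by rw [h4]; rfl, h5⟩)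

end Split
section Main
variable {A : Type}

theorem shift_shift (k : Nat) (N : Tm A) :
    Tm.rename (· + k) (Tm.rename Nat.succ N) = Tm.rename (· + (k+1)) N := by
  rw [Tm.rename_rename]
  exact Tm.rename_congr (fun n => by omega) N

theorem main_comm {a : A} (H : Hd A) : ∀ (Y : Tm A), a ∉ H.locs → ∀ (M : Tm A),
    SpineStep (H.plug (Tm.pop a M)) Y →
    ∃ (H' : Hd A) (M' : Tm A), Y = H'.plug (Tm.pop a M') ∧ a ∉ H'.locs ∧
      ∀ N : Tm A,
        SpineStep (H.plug (Tm.subst1 (Tm.rename (· + H.binders) N) M))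
          (H'.plug (Tm.subst1 (Tm.rename (· + H'.binders) N) M')) := by
  induction H with
  | hole =>
    intro Y ha M h
    obtain ⟨M', rfl, hM⟩ := step_pop_inv h
    exact ⟨Hd.hole, M', rfl, ha, fun N => subst_step hM _⟩
  | push P b H1 ih =>
    intro Y ha M h
    have hab : a ≠ b := by simp [Hd.locs] at ha; tauto
    have ha1 : a ∉ H1.locs := by simp [Hd.locs] at ha; tauto
    rcases step_push_inv h with ⟨X', rfl, hX⟩ | ⟨K, M1, hKeq, hbK, rfl⟩
    · obtain ⟨H2, M', rfl, ha2, hstep⟩ := ih X' ha1 M hX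
      exact ⟨Hd.push P b H2, M', rfl, by simp [Hd.locs, ha2, hab],
        fun N => SpineStep.pushL P b (hstep N)⟩
    · rcases plug_split H1 K hKeq with ⟨rfl, hab', _⟩ | ⟨K2, rfl, rfl⟩ | ⟨H3, rfl, rfl⟩
      · exact absurd hab' hab
      · -- subcase: the consumed pop b lies inside M
        have hbH1 : b ∉ H1.locs := by simp at hbK; tauto
        have hbK2 : b ∉ K2.locs := by simp at hbK; tauto
        set c := H1.binders with hc
        set j := K2.binders with hj
        refine ⟨H1, K2.plug (Tm.subst1
            (Tm.rename (· + (H1.append (Hd.pop a K2)).binders) P) M1), ?_, ha1, fun N => ?_⟩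
        · simp [Hd.plug_append, Hd.plug]
        · set Q := Tm.rename (· + c) N with hQ
          show SpineStep (Tm.push P b (H1.plug (Tm.subst1 Q (K2.plug (Tm.pop b M1))))) _
          rw [Tm.subst1_eq Q, Hd.subst_plug]
          simp only [Tm.subst]
          rw [← Hd.plug_append]
          -- rewrite the target
          rw [Hd.subst_plug]
          rw [show (H1.append (Hd.pop a K2)).binders = c + 1 + j by
            simp [Hd.binders_append, Hd.binders]; omega]
          rw [Tm.commC Q P M1 c j]
          rw [show Tm.liftSn (j+1) (Tm.sOne Q) = Tm.liftS (Tm.liftSn j (Tm.sOne Q)) from rfl]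
          rw [← Hd.plug_append]
          have hb2 : b ∉ (H1.append (Hd.substC (Tm.sOne Q) K2)).locs := by
            simp [Hd.locs_append, Hd.locs_substC, hbH1, hbK2]
          have hbeta := SpineStep.beta P b (H1.append (Hd.substC (Tm.sOne Q) K2))
            (Tm.subst (Tm.liftS (Tm.liftSn j (Tm.sOne Q))) M1) hb2
          rw [show (H1.append (Hd.substC (Tm.sOne Q) K2)).binders = c + j by
            simp [Hd.binders_append, Hd.binders_substC]; rfl] at hbeta
          exact hbeta
      · -- subcase: the consumed pop b lies inside H1, above the hole
        have haK : a ∉ K.locs := by simp [Hd.locs_append, Hd.locs] at ha1; tauto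
        have haH3 : a ∉ H3.locs := by simp [Hd.locs_append, Hd.locs] at ha1; tauto
        set c := K.binders with hc
        set j := H3.binders with hj
        set σP := Tm.sOne (Tm.rename (· + c) P) with hσP
        refine ⟨K.append (Hd.substC σP H3), Tm.subst (Tm.liftSn (j+1) σP) M, ?_, ?_, fun N => ?_⟩
        · rw [Tm.subst1_eq, Hd.subst_plug]
          simp only [Tm.subst]
          rw [← Hd.plug_append]
          rfl
        · simp [Hd.locs_append, Hd.locs_substC, haK, haH3]
        · show SpineStep (Tm.push P b ((K.append (Hd.pop b H3)).plug
            (Tm.subst1 (Tm.rename (· + (Hd.push P b (K.append (Hd.pop b H3))).binders) N) M))) _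
          rw [show (Hd.push P b (K.append (Hd.pop b H3))).binders = c + 1 + j by
            simp [Hd.binders, Hd.binders_append]; omega]
          rw [Hd.plug_append]
          simp only [Hd.plug]
          -- rewrite the target
          rw [show (K.append (Hd.substC σP H3)).binders = c + j by
            simp [Hd.binders_append, Hd.binders_substC]; rfl]
          rw [Hd.plug_append]
          rw [← Tm.commC (Tm.rename (· + c) P) N M c j]
          rw [← hσP]
          rw [← Hd.subst_plug σP H3]
          rw [← Tm.subst1_eq]
          exact SpineStep.beta P b K (H3.plug (Tm.subst1 (Tm.rename (· + (c+1+j)) N) M)) hbK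
  | pop b H1 ih =>
    intro Y ha M h
    have hab : a ≠ b := by simp [Hd.locs] at ha; tauto
    have ha1 : a ∉ H1.locs := by simp [Hd.locs] at ha; tauto
    obtain ⟨Y1, rfl, hY1⟩ := step_pop_inv h
    obtain ⟨H2, M', rfl, ha2, hstep⟩ := ih Y1 ha1 M hY1
    refine ⟨Hd.pop b H2, M', rfl, by simp [Hd.locs, ha2, hab], fun N => ?_⟩
    have hs := hstep (Tm.rename Nat.succ N)
    rw [shift_shift, shift_shift] at hs
    exact SpineStep.pop b hs

end Main
section Final
variable {A : Type}

theorem rg_map {X Y : Tm A} (f : Tm A → Tm A)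
    (hf : ∀ {U V : Tm A}, SpineStep U V → SpineStep (f U) (f V))
    (h : Relation.ReflGen SpineStep X Y) :
    Relation.ReflGen SpineStep (f X) (f Y) := by
  cases h with
  | refl => exact .refl
  | single h => exact .single (hf h)

/-- Spine reduction is diamond: any peak of single spine steps converges,
with each side reaching the common reduct in at most one spine step. -/
theorem fmc_spine_diamond {A : Type} (M N P : Tm A)
    (hN : SpineStep M N) (hP : SpineStep M P) :
    ∃ Q : Tm A, Relation.ReflGen SpineStep N Q ∧ Relation.ReflGen SpineStep P Q := by
  revert hP
  induction hN generalizing P with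
  | beta N0 a H M0 hl =>
    intro hP
    rcases step_push_inv hP with ⟨X', rfl, hX⟩ | ⟨K, M1, hKeq, haK, rfl⟩
    · obtain ⟨H', M', rfl, ha', hstep⟩ := main_comm H X' hl M0 hX
      exact ⟨H'.plug (Tm.subst1 (Tm.rename (· + H'.binders) N0) M'),
        Relation.ReflGen.single (hstep N0),
        Relation.ReflGen.single (SpineStep.beta N0 a H' M' ha')⟩
    · rcases plug_split H K hKeq with ⟨rfl, _, rfl⟩ | ⟨K2, rfl, _⟩ | ⟨H2, rfl, _⟩
      · exact ⟨_, Relation.ReflGen.refl, Relation.ReflGen.refl⟩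
      · exact absurd (by simp [Hd.locs_append, Hd.locs] : a ∈ (H.append (Hd.pop a K2)).locs) haK
      · exact absurd (by simp [Hd.locs_append, Hd.locs] : a ∈ (K.append (Hd.pop a H2)).locs) hl
  | var n h ih =>
    intro hP
    obtain ⟨X', rfl, hX⟩ := step_var_inv hP
    obtain ⟨Q, h1, h2⟩ := ih X' hX
    exact ⟨Tm.var n Q, rg_map _ (fun h => SpineStep.var n h) h1,
      rg_map _ (fun h => SpineStep.var n h) h2⟩
  | pushL N0 a h ih =>
    intro hP
    rcases step_push_inv hP with ⟨X'', rfl, hX⟩ | ⟨K, M1, hKeq, haK, rfl⟩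
    · obtain ⟨Q, h1, h2⟩ := ih X'' hX
      exact ⟨Tm.push N0 a Q, rg_map _ (fun h => SpineStep.pushL N0 a h) h1,
        rg_map _ (fun h => SpineStep.pushL N0 a h) h2⟩
    · subst hKeq
      obtain ⟨H', M', rfl, ha', hstep⟩ := main_comm K _ haK M1 h
      exact ⟨H'.plug (Tm.subst1 (Tm.rename (· + H'.binders) N0) M'),
        Relation.ReflGen.single (SpineStep.beta N0 a H' M' ha'),
        Relation.ReflGen.single (hstep N0)⟩
  | pop a h ih =>
    intro hP
    obtain ⟨X', rfl, hX⟩ := step_pop_inv hP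
    obtain ⟨Q, h1, h2⟩ := ih X' hX
    exact ⟨Tm.pop a Q, rg_map _ (fun h => SpineStep.pop a h) h1,
      rg_map _ (fun h => SpineStep.pop a h) h2⟩

end Final
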